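/- arXiv:2003.01432 — 2 statements merged into one kernel-verified Lean document; each statement's English description precedes it below -/
import Mathlib

section
/- (Representer theorem for projection learning) Let K be an operator-valued kernel on X with vv-RKHS H_K ⊂ F(X, ℝ^d), let Φ : ℝ^d → L²(Θ) be a projection operator, and let ℓ : L²(Θ) × L²(Θ) → ℝ be continuous and convex in its second argument. For λ > 0, the optimization problem min_{h ∈ H_K} (1/n)Σ_{i=1}^n ℓ(y_i, Φh(x_i)) + λ‖h‖²_{H_K} admits a unique minimizer h*, and there exist coefficients α_1, ..., α_n ∈ ℝ^d such that h* = Σ_{j=1}^n K_{x_j} α_j. -/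
open MeasureTheory ContinuousLinearMap

noncomputable section

/-- Sum of convex functions is convex. -/
lemma convexOn_finset_sum {E : Type*} [AddCommGroup E] [Module ℝ E]
    {ι : Type*} (t : Finset ι) {f : ι → E → ℝ}
    (hf : ∀ i ∈ t, ConvexOn ℝ Set.univ (f i)) :
    ConvexOn ℝ Set.univ (fun x => ∑ i ∈ t, f i x) := by
  classical
  induction t using Finset.induction_on with
  | empty => simpa using convexOn_const (0:ℝ) convex_univ
  | insert a s hx ih =>
    simp only [Finset.sum_insert hx]
    exact (hf a (Finset.mem_insert_self a s)).add
      (ih fun i hi => hf i (Finset.mem_insert_of_mem hi))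

set_option maxHeartbeats 2000000 in
/-- Representer theorem for projection learning. -/
theorem stmt4 {q d n : ℕ} {X H : Type*}
    [NormedAddCommGroup H] [InnerProductSpace ℝ H] [CompleteSpace H]
    (Θ : Set (EuclideanSpace ℝ (Fin q))) (hΘ : IsCompact Θ)
    (μ : Measure Θ)
    -- the partial kernel maps of the operator-valued kernel; the reproducing
    -- property reads `h(x) = (K_x)* h`
    (Kx : X → (EuclideanSpace ℝ (Fin d) →L[ℝ] H))
    (Φ : EuclideanSpace ℝ (Fin d) →L[ℝ] Lp ℝ 2 μ)
    (ℓ : Lp ℝ 2 μ → Lp ℝ 2 μ → ℝ)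
    (hℓcont : ∀ y0, Continuous (ℓ y0))
    (hℓconv : ∀ y0, ConvexOn ℝ Set.univ (ℓ y0))
    (x : Fin n → X) (y : Fin n → Lp ℝ 2 μ)
    (lam : ℝ) (hlam : 0 < lam) :
    ∃ hstar : H,
      (∀ h : H,
        (1 / (n : ℝ)) * ∑ i, ℓ (y i) (Φ ((adjoint (Kx (x i))) hstar)) + lam * ‖hstar‖ ^ 2 ≤
        (1 / (n : ℝ)) * ∑ i, ℓ (y i) (Φ ((adjoint (Kx (x i))) h)) + lam * ‖h‖ ^ 2) ∧
      (∀ h' : H,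
        (∀ h : H,
          (1 / (n : ℝ)) * ∑ i, ℓ (y i) (Φ ((adjoint (Kx (x i))) h')) + lam * ‖h'‖ ^ 2 ≤
          (1 / (n : ℝ)) * ∑ i, ℓ (y i) (Φ ((adjoint (Kx (x i))) h)) + lam * ‖h‖ ^ 2) →
        h' = hstar) ∧
      ∃ α : Fin n → EuclideanSpace ℝ (Fin d), hstar = ∑ j, Kx (x j) (α j) := by
  classical
  set D : H → ℝ := fun h => (1 / (n : ℝ)) * ∑ i, ℓ (y i) (Φ ((adjoint (Kx (x i))) h))
    with hDdef
  set J : H → ℝ := fun h => D h + lam * ‖h‖ ^ 2 with hJdef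
  -- the finite dimensional subspace
  set T : (Fin n → EuclideanSpace ℝ (Fin d)) →ₗ[ℝ] H :=
    ∑ j, (Kx (x j)).toLinearMap.comp (LinearMap.proj j) with hTdef
  have hTapply : ∀ α, T α = ∑ j, Kx (x j) (α j) := by
    intro α
    simp [hTdef, LinearMap.sum_apply]
  set S : Submodule ℝ H := LinearMap.range T with hSdef
  haveI : FiniteDimensional ℝ S := by rw [hSdef]; infer_instance
  have hmemS : ∀ (i : Fin n) (v : EuclideanSpace ℝ (Fin d)), Kx (x i) v ∈ S := by
    intro i v
    refine ⟨Pi.single i v, ?_⟩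
    rw [hTapply, Finset.sum_eq_single_of_mem i (Finset.mem_univ i)]
    · simp
    · intro j _ hj
      simp [Pi.single_eq_of_ne hj]
  set P := S.orthogonalProjectionOnto with hPdef
  -- the data term only depends on the projection onto S
  have hAproj : ∀ (i : Fin n) (h : H),
      (adjoint (Kx (x i))) ((P h : H)) = (adjoint (Kx (x i))) h := by
    intro i h
    have hw : h - (P h : H) ∈ Sᗮ := S.sub_starProjection_mem_orthogonal h
    have h0 : (adjoint (Kx (x i))) (h - (P h : H)) = 0 := by
      have : (inner ℝ ((adjoint (Kx (x i))) (h - (P h : H)))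
          ((adjoint (Kx (x i))) (h - (P h : H))) : ℝ) = 0 := by
        rw [adjoint_inner_left, real_inner_comm]
        exact hw _ (hmemS i _)
      exact inner_self_eq_zero.mp this
    have h1 : (adjoint (Kx (x i))) h - (adjoint (Kx (x i))) (P h : H) = 0 := by
      rw [← map_sub]; exact h0
    exact (sub_eq_zero.mp h1).symm
  have hDP : ∀ h : H, D ((P h : H)) = D h := by
    intro h
    simp only [hDdef]
    congr 1
    exact Finset.sum_congr rfl fun i _ => by rw [hAproj]
  -- norms decompose orthogonally
  have hnormP : ∀ h : H, ‖(P h : H)‖ ^ 2 + ‖h - (P h : H)‖ ^ 2 = ‖h‖ ^ 2 := by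
    intro h
    have horth : (inner ℝ ((P h : H)) (h - (P h : H)) : ℝ) = 0 := by
      have hw : h - (P h : H) ∈ Sᗮ := S.sub_starProjection_mem_orthogonal h
      exact hw ((P h : H)) (P h).2
    have := norm_add_sq_real ((P h : H)) (h - (P h : H))
    have hre : (P h : H) + (h - (P h : H)) = h := by abel
    rw [hre, horth] at this
    linarith
  have hJP : ∀ h : H, J ((P h : H)) ≤ J h := by
    intro h
    simp only [hJdef, hDP]
    have := hnormP h
    nlinarith [sq_nonneg ‖h - (P h : H)‖, hlam.le, sq_nonneg ‖h - (P h : H)‖,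
      mul_nonneg hlam.le (sq_nonneg ‖h - (P h : H)‖)]
  -- convexity of the data term
  have hDconv : ConvexOn ℝ Set.univ D := by
    have h1 : ∀ i : Fin n,
        ConvexOn ℝ Set.univ (fun h : H => ℓ (y i) (Φ ((adjoint (Kx (x i))) h))) := by
      intro i
      have := (hℓconv (y i)).comp_affineMap
        ((Φ.comp (adjoint (Kx (x i)))).toLinearMap.toAffineMap)
      simpa [Function.comp_def] using this
    have h2 := convexOn_finset_sum (E := H) Finset.univ (fun i _ => h1 i)
    have h3 := h2.smul (c := (1 / (n:ℝ))) (by positivity)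
    simpa [hDdef, smul_eq_mul] using h3
  -- continuity
  have hDcont : Continuous D := by
    apply continuous_const.mul
    apply continuous_finset_sum
    intro i _
    exact (hℓcont (y i)).comp (Φ.continuous.comp (adjoint (Kx (x i))).continuous)
  have hJcont : Continuous J :=
    hDcont.add (continuous_const.mul (continuous_norm.pow 2))
  -- minimize over S
  set g : S → ℝ := fun s => J (s : H) with hgdef
  have hgcont : Continuous g := hJcont.comp continuous_subtype_val
  have hD'conv : ConvexOn ℝ Set.univ (fun s : S => D (s : H)) := by
    have := hDconv.comp_affineMap (S.subtype.toAffineMap)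
    simpa [Function.comp_def] using this
  obtain ⟨M, hM⟩ := (isCompact_sphere (0 : S) 1).exists_bound_of_continuousOn
    ((hDcont.comp continuous_subtype_val).continuousOn)
  set C : ℝ := max 0 M + |D 0| with hCdef
  have hC0 : 0 ≤ C := by positivity
  have hDlow : ∀ s : S, 1 ≤ ‖s‖ → -(C * ‖s‖) ≤ D (s : H) := by
    intro s hs
    have hr : (0:ℝ) < ‖s‖ := lt_of_lt_of_le one_pos hs
    set t : ℝ := ‖s‖⁻¹ with htdef
    have ht0 : 0 < t := inv_pos.mpr hr
    have htr : t * ‖s‖ = 1 := inv_mul_cancel₀ hr.ne'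
    have ht1 : t ≤ 1 := by
      rw [htdef]
      exact inv_le_one_of_one_le₀ hs
    have hu : t • s ∈ Metric.sphere (0 : S) 1 := by
      rw [mem_sphere_zero_iff_norm, norm_smul, Real.norm_eq_abs, abs_of_pos ht0, htr]
    have hMu : |D ((t • s : S) : H)| ≤ M := by
      have := hM _ hu
      simpa [Real.norm_eq_abs] using this
    have hconv := hD'conv.2 (Set.mem_univ s) (Set.mem_univ (0 : S))
      ht0.le (by linarith : (0:ℝ) ≤ 1 - t) (by ring)
    simp only [smul_zero, add_zero, smul_eq_mul] at hconv
    -- hconv : D ↑(t • s) ≤ t * D ↑s + (1 - t) * D ↑(0 : S)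
    have hz : ((0 : S) : H) = 0 := rfl
    rw [hz] at hconv
    have habs1 : -M ≤ D ((t • s : S) : H) := by
      have := abs_le.mp hMu
      linarith [this.1, le_max_right (0:ℝ) M]
    have hD0 : (1 - t) * D 0 ≤ (1 - t) * |D 0| :=
      mul_le_mul_of_nonneg_left (le_abs_self _) (by linarith)
    have hMM : M ≤ max 0 M := le_max_right 0 M
    have habs : -(max 0 M) ≤ D ((t • s : S) : H) := by
      have := (abs_le.mp hMu).1
      linarith
    -- combine: t * D s ≥ D(t•s) - (1-t) D 0 ≥ -(max 0 M) - (1-t)|D 0|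
    have hkey : -(max 0 M) - (1 - t) * |D 0| ≤ t * D (s : H) := by linarith
    have habs0 : 0 ≤ |D (0:H)| := abs_nonneg _
    nlinarith [mul_le_mul_of_nonneg_left hkey hr.le, htr, hs,
      mul_nonneg (mul_nonneg hr.le (by linarith : (0:ℝ) ≤ 1 - t)) habs0]
  -- coercivity gives eventual lower bound on the cocompact filter
  set R : ℝ := max 1 ((C + |J 0|) / lam) with hRdef
  have hev : ∀ᶠ s : S in Filter.cocompact S, g 0 ≤ g s := by
    have := tendsto_norm_cocompact_atTop (E := S)
    filter_upwards [this.eventually_ge_atTop R] with s hsR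
    have hs1 : 1 ≤ ‖s‖ := le_trans (le_max_left _ _) hsR
    have hs2 : (C + |J 0|) / lam ≤ ‖s‖ := le_trans (le_max_right _ _) hsR
    have hs3 : C + |J 0| ≤ lam * ‖s‖ := by
      rw [div_le_iff₀ hlam] at hs2
      linarith [hs2]
    have hlow := hDlow s hs1
    have hg0 : g 0 = J 0 := by
      simp only [hgdef]
      norm_num
    rw [hg0]
    have hcoe : ‖(s : H)‖ = ‖s‖ := rfl
    have hJ0 : J 0 ≤ |J 0| := le_abs_self _
    have hgs : g s = D (s : H) + lam * ‖s‖ ^ 2 := by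
      simp only [hgdef, hJdef, hcoe]
    rw [hgs]
    nlinarith [hlow, hs1, hs3, hC0, abs_nonneg (J 0),
      mul_nonneg (sub_nonneg.mpr hs3) (by linarith : (0:ℝ) ≤ ‖s‖),
      mul_nonneg (abs_nonneg (J 0)) (by linarith : (0:ℝ) ≤ ‖s‖ - 1)]
  obtain ⟨s0, hs0⟩ := hgcont.exists_forall_le' (0 : S) hev
  refine ⟨(s0 : H), ?_, ?_, ?_⟩
  · -- global minimality
    intro h
    show J (s0 : H) ≤ J h
    calc J (s0 : H) ≤ J ((P h : H)) := hs0 (P h)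
    _ ≤ J h := hJP h
  · -- uniqueness
    intro h' hmin'
    by_contra hne
    have e1 : J h' ≤ J (s0 : H) := hmin' (s0 : H)
    have e2 : J (s0 : H) ≤ J h' := by
      calc J (s0 : H) ≤ J ((P h' : H)) := hs0 (P h')
      _ ≤ J h' := hJP h'
    set z : H := (2⁻¹ : ℝ) • h' + (2⁻¹ : ℝ) • (s0 : H) with hzdef
    have hDz : D z ≤ 2⁻¹ * D h' + 2⁻¹ * D (s0 : H) := by
      have := hDconv.2 (Set.mem_univ h') (Set.mem_univ (s0 : H))
        (by norm_num : (0:ℝ) ≤ 2⁻¹) (by norm_num : (0:ℝ) ≤ 2⁻¹) (by norm_num)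
      simpa [smul_eq_mul] using this
    have hpar := parallelogram_law_with_norm ℝ h' (s0 : H)
    have hnz : 0 < ‖h' - (s0 : H)‖ := by
      rw [norm_pos_iff]
      exact sub_ne_zero.mpr hne
    have hznorm : ‖z‖ = 2⁻¹ * ‖h' + (s0 : H)‖ := by
      rw [hzdef, ← smul_add, norm_smul, Real.norm_eq_abs]
      norm_num
    have hz2 : lam * ‖z‖ ^ 2 < 2⁻¹ * (lam * ‖h'‖ ^ 2) + 2⁻¹ * (lam * ‖(s0:H)‖ ^ 2) := by
      rw [hznorm]
      nlinarith [hpar, mul_pos hlam (mul_pos hnz hnz), hlam.le]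
    have hJz : J z < J (s0 : H) := by
      simp only [hJdef]
      have : J h' = J (s0 : H) := le_antisymm e1 e2
      simp only [hJdef] at this
      nlinarith [hDz, hz2]
    have : J h' ≤ J z := hmin' z
    linarith [hJz, e2, this]
  · -- representer form
    obtain ⟨α, hα⟩ := s0.2
    exact ⟨α, by rw [← hα, hTapply]⟩
end
end

section
/- Let K ∈ ℝ^{N×N} be symmetric positive semidefinite and M ∈ ℝ^{N×N} be symmetric positive semidefinite, and λ > 0. Then the linear system (K M K + λK)v = K b has a solution v ∈ ℝ^N for every b ∈ ℝ^N. If moreover K is invertible, then (MK + λI) is invertible. -/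
open Matrix

noncomputable section

theorem stmt6 {N : ℕ} (K M : Matrix (Fin N) (Fin N) ℝ)
    (hK : K.PosSemidef) (hM : M.PosSemidef) (lam : ℝ) (hlam : 0 < lam) :
    (∀ b : Fin N → ℝ, ∃ v : Fin N → ℝ,
      (K * M * K + lam • K) *ᵥ v = K *ᵥ b) ∧
    (IsUnit K → IsUnit (M * K + lam • (1 : Matrix (Fin N) (Fin N) ℝ))) := by
  set A : Matrix (Fin N) (Fin N) ℝ := K * M * K + lam • K with hA
  -- key: A v = 0 → K v = 0
  have key : ∀ v : Fin N → ℝ, A *ᵥ v = 0 → K *ᵥ v = 0 := by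
    intro v hv
    have h1 : v ⬝ᵥ (A *ᵥ v) = 0 := by rw [hv, dotProduct_zero]
    have hsplit : v ⬝ᵥ (A *ᵥ v) = (K *ᵥ v) ⬝ᵥ (M *ᵥ (K *ᵥ v)) + lam * (v ⬝ᵥ (K *ᵥ v)) := by
      rw [hA, add_mulVec, dotProduct_add, smul_mulVec, dotProduct_smul]
      have hKs : Kᵀ = K := by
        rw [← conjTranspose_eq_transpose_of_trivial]; exact hK.1
      congr 1
      rw [← mulVec_mulVec, ← mulVec_mulVec, dotProduct_mulVec, ← hKs, vecMul_transpose, hKs]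
    have hm : 0 ≤ (K *ᵥ v) ⬝ᵥ (M *ᵥ (K *ᵥ v)) := by simpa using hM.dotProduct_mulVec_nonneg (K *ᵥ v)
    have hk : 0 ≤ v ⬝ᵥ (K *ᵥ v) := by simpa using hK.dotProduct_mulVec_nonneg v
    have hKv : v ⬝ᵥ (K *ᵥ v) = 0 := by nlinarith [hsplit, h1]
    have := (hK.dotProduct_mulVec_zero_iff v).mp (by simpa using hKv)
    exact this
  have hAeq : A = K * (M * K + lam • (1 : Matrix (Fin N) (Fin N) ℝ)) := by
    rw [hA]; rw [Matrix.mul_add, Matrix.mul_smul, Matrix.mul_one, Matrix.mul_assoc]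
  constructor
  · intro b
    -- kernels equal
    have hker : LinearMap.ker A.mulVecLin = LinearMap.ker K.mulVecLin := by
      apply le_antisymm
      · intro v hv; exact key v hv
      · intro v hv
        have hv' : K *ᵥ v = 0 := hv
        show A *ᵥ v = 0
        rw [hA, add_mulVec, smul_mulVec, hv', ← mulVec_mulVec, ← mulVec_mulVec, hv']
        simp
    have hle : LinearMap.range A.mulVecLin ≤ LinearMap.range K.mulVecLin := by
      rw [hAeq]
      rintro x ⟨v, rfl⟩
      exact ⟨(M * K + lam • 1) *ᵥ v, by simp only [mulVecLin_apply, mulVec_mulVec]⟩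
    have hrank : Module.finrank ℝ (LinearMap.range A.mulVecLin) =
        Module.finrank ℝ (LinearMap.range K.mulVecLin) := by
      have h1 := LinearMap.finrank_range_add_finrank_ker A.mulVecLin
      have h2 := LinearMap.finrank_range_add_finrank_ker K.mulVecLin
      rw [hker] at h1
      omega
    have heq : LinearMap.range A.mulVecLin = LinearMap.range K.mulVecLin :=
      Submodule.eq_of_le_of_finrank_eq hle hrank
    have : K *ᵥ b ∈ LinearMap.range A.mulVecLin := heq ▸ ⟨b, rfl⟩
    obtain ⟨v, hv⟩ := this
    exact ⟨v, hv⟩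
  · intro hKu
    set B : Matrix (Fin N) (Fin N) ℝ := M * K + lam • 1 with hB
    rw [Matrix.isUnit_iff_isUnit_det, isUnit_iff_ne_zero]
    intro hdet
    obtain ⟨v, hv0, hv⟩ := (Matrix.exists_mulVec_eq_zero_iff).mpr hdet
    have hAv : A *ᵥ v = 0 := by
      rw [hAeq, ← mulVec_mulVec, hv, mulVec_zero]
    have hKv := key v hAv
    have : v = 0 := by
      obtain ⟨Ki, hKi⟩ := hKu.exists_left_inv
      have := congrArg (Ki *ᵥ ·) hKv
      simpa [mulVec_mulVec, hKi] using this
    exact hv0 this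
end
end
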